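/- arXiv:0910.3227 — 2 statements merged into one kernel-verified Lean document; each statement's English description precedes it below -/
import Mathlib

section
/- Let k1 > k2 > 0, μ1 > μ2 > 0, θ1, θ2 > 0 with θ1 + θ2 = 1. Define L2 = k2(k1 + (4/3)μ1)/(k1k2 + (k1θ1 + k2θ2)(4/3)μ1), M2 = k2(k1 + (4/3)μ2)/(k1k2 + (k1θ1 + k2θ2)(4/3)μ2), and let K⁻, K⁺ be the Hashin–Shtrikman bulk modulus bounds. If K⁻ ≤ Ke ≤ K⁺ and X = θ2⁻¹ (1/k1 − 1/Ke)/(1/k1 − 1/k2), then L2 ≤ X ≤ M2. -/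
set_option maxHeartbeats 1000000 in
theorem X_interval_wellordered (k1 k2 μ1 μ2 θ1 θ2 Ke X : ℝ)
    (hk : k1 > k2) (hk2 : k2 > 0) (hμ : μ1 > μ2) (hμ2 : μ2 > 0)
    (hθ1 : θ1 > 0) (hθ2 : θ2 > 0) (hsum : θ1 + θ2 = 1)
    (hKm : k1 * θ1 + k2 * θ2 - θ1 * θ2 * (k2 - k1)^2 / (k1 * θ2 + k2 * θ1 + (4/3) * μ2) ≤ Ke)
    (hKp : Ke ≤ k1 * θ1 + k2 * θ2 - θ1 * θ2 * (k2 - k1)^2 / (k1 * θ2 + k2 * θ1 + (4/3) * μ1))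
    (hX : X = θ2⁻¹ * (1/k1 - 1/Ke) / (1/k1 - 1/k2)) :
    k2 * (k1 + (4/3) * μ1) / (k1 * k2 + (k1 * θ1 + k2 * θ2) * ((4/3) * μ1)) ≤ X ∧
    X ≤ k2 * (k1 + (4/3) * μ2) / (k1 * k2 + (k1 * θ1 + k2 * θ2) * ((4/3) * μ2)) := by
  have hθ1e : θ1 = 1 - θ2 := by linarith
  subst hθ1e
  have hk1 : (0:ℝ) < k1 := lt_trans hk2 hk
  have hμ1 : (0:ℝ) < μ1 := lt_trans hμ2 hμ
  have hS : (0:ℝ) < k1 * (1-θ2) + k2 * θ2 := by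
    nlinarith [mul_pos hk1 hθ1, mul_pos hk2 hθ2]
  have hS' : (0:ℝ) < k1 * θ2 + k2 * (1-θ2) := by
    nlinarith [mul_pos hk1 hθ2, mul_pos hk2 hθ1]
  have hD1 : (0:ℝ) < k1 * θ2 + k2 * (1-θ2) + (4/3) * μ1 := by nlinarith
  have hD2 : (0:ℝ) < k1 * θ2 + k2 * (1-θ2) + (4/3) * μ2 := by nlinarith
  have hN1 : (0:ℝ) < k1 * k2 + (k1 * (1-θ2) + k2 * θ2) * ((4/3) * μ1) := by
    nlinarith [mul_pos hk1 hk2, mul_pos hS hμ1]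
  have hN2 : (0:ℝ) < k1 * k2 + (k1 * (1-θ2) + k2 * θ2) * ((4/3) * μ2) := by
    nlinarith [mul_pos hk1 hk2, mul_pos hS hμ2]
  have hKp' : Ke * (k1 * θ2 + k2 * (1-θ2) + (4/3) * μ1)
      ≤ (k1 * (1-θ2) + k2 * θ2) * (k1 * θ2 + k2 * (1-θ2) + (4/3) * μ1)
        - (1-θ2) * θ2 * (k2 - k1)^2 := by
    have h := mul_le_mul_of_nonneg_right hKp hD1.le
    rwa [sub_mul, div_mul_cancel₀ _ hD1.ne'] at h
  have hKm' : (k1 * (1-θ2) + k2 * θ2) * (k1 * θ2 + k2 * (1-θ2) + (4/3) * μ2)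
        - (1-θ2) * θ2 * (k2 - k1)^2
      ≤ Ke * (k1 * θ2 + k2 * (1-θ2) + (4/3) * μ2) := by
    have h := mul_le_mul_of_nonneg_right hKm hD2.le
    rwa [sub_mul, div_mul_cancel₀ _ hD2.ne'] at h
  have hT : (0:ℝ) ≤ (1-θ2) * θ2 * (k2 - k1)^2 := by positivity
  -- Ke > 0
  have hKeD2 : k1 * k2 + (k1 * (1-θ2) + k2 * θ2) * ((4/3) * μ2)
      ≤ Ke * (k1 * θ2 + k2 * (1-θ2) + (4/3) * μ2) := by
    have hid : (k1 * (1-θ2) + k2 * θ2) * (k1 * θ2 + k2 * (1-θ2) + (4/3) * μ2)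
        - (1-θ2) * θ2 * (k2 - k1)^2
        = k1 * k2 + (k1 * (1-θ2) + k2 * θ2) * ((4/3) * μ2) := by ring
    linarith [hKm']
  have hKe : (0:ℝ) < Ke := by
    have h2 : (0:ℝ) * (k1 * θ2 + k2 * (1-θ2) + (4/3) * μ2)
        < Ke * (k1 * θ2 + k2 * (1-θ2) + (4/3) * μ2) := by
      rw [zero_mul]; linarith [hKeD2, hN2]
    exact lt_of_mul_lt_mul_right h2 hD2.le
  -- Ke < k1
  have hKele : Ke < k1 := by
    have h1 : (0:ℝ) < θ2 * (k1 - k2) * (k1 * θ2 + k2 * (1-θ2) + (4/3) * μ1) :=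
      mul_pos (mul_pos hθ2 (by linarith)) hD1
    have hid : k1 * (k1 * θ2 + k2 * (1-θ2) + (4/3) * μ1)
        - (k1 * (1-θ2) + k2 * θ2) * (k1 * θ2 + k2 * (1-θ2) + (4/3) * μ1)
        = θ2 * (k1 - k2) * (k1 * θ2 + k2 * (1-θ2) + (4/3) * μ1) := by ring
    have h2 : Ke * (k1 * θ2 + k2 * (1-θ2) + (4/3) * μ1)
        < k1 * (k1 * θ2 + k2 * (1-θ2) + (4/3) * μ1) := by linarith [hKp', hT]
    exact lt_of_mul_lt_mul_right h2 hD1.le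
  have hden : (0:ℝ) < θ2 * Ke * (k1 - k2) :=
    mul_pos (mul_pos hθ2 hKe) (sub_pos.mpr hk)
  have hXeq : X = k2 * (k1 - Ke) / (θ2 * Ke * (k1 - k2)) := by
    rw [hX]
    rw [div_eq_div_iff (by
      have : 1/k1 - 1/k2 < 0 := by
        rw [sub_neg]
        exact one_div_lt_one_div_of_lt hk2 hk
      exact this.ne) hden.ne']
    field_simp
    ring
  rw [hXeq]
  constructor
  · rw [div_le_div_iff₀ hN1 hden]
    set C := k2 * ((k1 + (4/3)*μ1) * θ2 * (k1 - k2)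
        + (k1 * k2 + (k1 * (1-θ2) + k2 * θ2) * ((4/3) * μ1))) with hCdef
    have hC : (0:ℝ) ≤ C := by
      have h1 : (0:ℝ) < (k1 + (4/3)*μ1) * θ2 * (k1 - k2) :=
        mul_pos (mul_pos (by linarith) hθ2) (by linarith)
      exact (mul_pos hk2 (by linarith)).le
    have key : C * (Ke * (k1 * θ2 + k2 * (1-θ2) + (4/3) * μ1))
        ≤ C * ((k1 * (1-θ2) + k2 * θ2) * (k1 * θ2 + k2 * (1-θ2) + (4/3) * μ1)
          - (1-θ2) * θ2 * (k2 - k1)^2) := mul_le_mul_of_nonneg_left hKp' hC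
    have hring : (k2 * (k1 - Ke) * (k1 * k2 + (k1 * (1-θ2) + k2 * θ2) * ((4/3) * μ1))
        - k2 * (k1 + (4/3) * μ1) * (θ2 * Ke * (k1 - k2)))
          * (k1 * θ2 + k2 * (1-θ2) + (4/3) * μ1)
        = C * ((k1 * (1-θ2) + k2 * θ2) * (k1 * θ2 + k2 * (1-θ2) + (4/3) * μ1)
          - (1-θ2) * θ2 * (k2 - k1)^2)
          - C * (Ke * (k1 * θ2 + k2 * (1-θ2) + (4/3) * μ1)) := by
      rw [hCdef]; ring
    have h0 : (0:ℝ) * (k1 * θ2 + k2 * (1-θ2) + (4/3) * μ1)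
        ≤ (k2 * (k1 - Ke) * (k1 * k2 + (k1 * (1-θ2) + k2 * θ2) * ((4/3) * μ1))
          - k2 * (k1 + (4/3) * μ1) * (θ2 * Ke * (k1 - k2)))
          * (k1 * θ2 + k2 * (1-θ2) + (4/3) * μ1) := by
      rw [zero_mul, hring]; linarith
    have := le_of_mul_le_mul_right h0 hD1
    linarith
  · rw [div_le_div_iff₀ hden hN2]
    set C := k2 * ((k1 + (4/3)*μ2) * θ2 * (k1 - k2)
        + (k1 * k2 + (k1 * (1-θ2) + k2 * θ2) * ((4/3) * μ2))) with hCdef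
    have hC : (0:ℝ) ≤ C := by
      have h1 : (0:ℝ) < (k1 + (4/3)*μ2) * θ2 * (k1 - k2) :=
        mul_pos (mul_pos (by linarith) hθ2) (by linarith)
      exact (mul_pos hk2 (by linarith)).le
    have key : C * ((k1 * (1-θ2) + k2 * θ2) * (k1 * θ2 + k2 * (1-θ2) + (4/3) * μ2)
          - (1-θ2) * θ2 * (k2 - k1)^2)
        ≤ C * (Ke * (k1 * θ2 + k2 * (1-θ2) + (4/3) * μ2)) :=
      mul_le_mul_of_nonneg_left hKm' hC
    have hring : (k2 * (k1 + (4/3) * μ2) * (θ2 * Ke * (k1 - k2))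
        - k2 * (k1 - Ke) * (k1 * k2 + (k1 * (1-θ2) + k2 * θ2) * ((4/3) * μ2)))
          * (k1 * θ2 + k2 * (1-θ2) + (4/3) * μ2)
        = C * (Ke * (k1 * θ2 + k2 * (1-θ2) + (4/3) * μ2))
          - C * ((k1 * (1-θ2) + k2 * θ2) * (k1 * θ2 + k2 * (1-θ2) + (4/3) * μ2)
          - (1-θ2) * θ2 * (k2 - k1)^2) := by
      rw [hCdef]; ring
    have h0 : (0:ℝ) * (k1 * θ2 + k2 * (1-θ2) + (4/3) * μ2)
        ≤ (k2 * (k1 + (4/3) * μ2) * (θ2 * Ke * (k1 - k2))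
          - k2 * (k1 - Ke) * (k1 * k2 + (k1 * (1-θ2) + k2 * θ2) * ((4/3) * μ2)))
          * (k1 * θ2 + k2 * (1-θ2) + (4/3) * μ2) := by
      rw [zero_mul, hring]; linarith
    have := le_of_mul_le_mul_right h0 hD2
    linarith
end

section
/- Let k1 > k2 > 0, μ1 > μ2 > 0, θ1, θ2 > 0 with θ1 + θ2 = 1. Define L1 = k1(k2 + (4/3)μ2)/(k1k2 + (k1θ1 + k2θ2)(4/3)μ2), M1 = k1(k2 + (4/3)μ1)/(k1k2 + (k1θ1 + k2θ2)(4/3)μ1), and let K⁻ ≤ Ke ≤ K⁺ be the Hashin–Shtrikman bounds. If Y = θ1⁻¹ (1/k2 − 1/Ke)/(1/k2 − 1/k1), then L1 ≤ Y ≤ M1. -/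
theorem Y_interval_wellordered (k1 k2 μ1 μ2 θ1 θ2 Ke Y : ℝ)
    (hk : k1 > k2) (hk2 : k2 > 0) (hμ : μ1 > μ2) (hμ2 : μ2 > 0)
    (hθ1 : θ1 > 0) (hθ2 : θ2 > 0) (hsum : θ1 + θ2 = 1)
    (hKm : k1 * θ1 + k2 * θ2 - θ1 * θ2 * (k2 - k1)^2 / (k1 * θ2 + k2 * θ1 + (4/3) * μ2) ≤ Ke)
    (hKp : Ke ≤ k1 * θ1 + k2 * θ2 - θ1 * θ2 * (k2 - k1)^2 / (k1 * θ2 + k2 * θ1 + (4/3) * μ1))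
    (hY : Y = θ1⁻¹ * (1/k2 - 1/Ke) / (1/k2 - 1/k1)) :
    k1 * (k2 + (4/3) * μ2) / (k1 * k2 + (k1 * θ1 + k2 * θ2) * ((4/3) * μ2)) ≤ Y ∧
    Y ≤ k1 * (k2 + (4/3) * μ1) / (k1 * k2 + (k1 * θ1 + k2 * θ2) * ((4/3) * μ1)) := by
  have hk1 : k1 > 0 := lt_trans hk2 hk
  have hμ1 : μ1 > 0 := lt_trans hμ2 hμ
  have hA : k1 * θ1 + k2 * θ2 > 0 := by positivity
  have hD2 : k1 * θ2 + k2 * θ1 + (4/3) * μ2 > 0 := by positivity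
  have hD1 : k1 * θ2 + k2 * θ1 + (4/3) * μ1 > 0 := by positivity
  have hN2 : k1 * k2 + (k1 * θ1 + k2 * θ2) * ((4/3) * μ2) > 0 := by positivity
  have hN1 : k1 * k2 + (k1 * θ1 + k2 * θ2) * ((4/3) * μ1) > 0 := by positivity
  have hθ2e : θ2 = 1 - θ1 := by linarith
  -- rewrite the HS bounds as ratios
  have hKmv : k1 * θ1 + k2 * θ2 - θ1 * θ2 * (k2 - k1)^2 / (k1 * θ2 + k2 * θ1 + (4/3) * μ2)
      = (k1 * k2 + (k1 * θ1 + k2 * θ2) * ((4/3) * μ2)) / (k1 * θ2 + k2 * θ1 + (4/3) * μ2) := by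
    subst hθ2e
    field_simp
    ring
  have hKpv : k1 * θ1 + k2 * θ2 - θ1 * θ2 * (k2 - k1)^2 / (k1 * θ2 + k2 * θ1 + (4/3) * μ1)
      = (k1 * k2 + (k1 * θ1 + k2 * θ2) * ((4/3) * μ1)) / (k1 * θ2 + k2 * θ1 + (4/3) * μ1) := by
    subst hθ2e
    field_simp
    ring
  rw [hKmv] at hKm
  rw [hKpv] at hKp
  have hKlo : (k1 * k2 + (k1 * θ1 + k2 * θ2) * ((4/3) * μ2)) / (k1 * θ2 + k2 * θ1 + (4/3) * μ2) > 0 :=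
    div_pos hN2 hD2
  have hKe : Ke > 0 := lt_of_lt_of_le hKlo hKm
  have hc : (0:ℝ) < 1/k2 - 1/k1 := by
    have : 1/k1 < 1/k2 := by
      apply one_div_lt_one_div_of_lt hk2 hk
    linarith
  -- bounds on 1/Ke
  have hinv_lo : 1/Ke ≤ (k1 * θ2 + k2 * θ1 + (4/3) * μ2) / (k1 * k2 + (k1 * θ1 + k2 * θ2) * ((4/3) * μ2)) := by
    rw [div_le_div_iff₀ hKe hN2]
    have := (div_le_iff₀ hD2).mp hKm
    linarith
  have hinv_hi : (k1 * θ2 + k2 * θ1 + (4/3) * μ1) / (k1 * k2 + (k1 * θ1 + k2 * θ2) * ((4/3) * μ1)) ≤ 1/Ke := by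
    rw [div_le_div_iff₀ hN1 hKe]
    have := (le_div_iff₀ hD1).mp hKp
    linarith
  constructor
  · have heq : k1 * (k2 + (4/3) * μ2) / (k1 * k2 + (k1 * θ1 + k2 * θ2) * ((4/3) * μ2))
        = θ1⁻¹ * (1/k2 - (k1 * θ2 + k2 * θ1 + (4/3) * μ2) / (k1 * k2 + (k1 * θ1 + k2 * θ2) * ((4/3) * μ2))) / (1/k2 - 1/k1) := by
      rw [eq_div_iff hc.ne']
      subst hθ2e
      field_simp
      ring
    rw [heq, hY]
    gcongr


  · have heq : k1 * (k2 + (4/3) * μ1) / (k1 * k2 + (k1 * θ1 + k2 * θ2) * ((4/3) * μ1))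
        = θ1⁻¹ * (1/k2 - (k1 * θ2 + k2 * θ1 + (4/3) * μ1) / (k1 * k2 + (k1 * θ1 + k2 * θ2) * ((4/3) * μ1))) / (1/k2 - 1/k1) := by
      rw [eq_div_iff hc.ne']
      subst hθ2e
      field_simp
      ring
    rw [heq, hY]
    gcongr
end
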